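/- Define the map Ω_α : ℤⁿ × ℤⁿ → S¹ by Ω_α(x,y) = exp(i α xᵗ J y), where n = 2m is even and J = [[0,I_m],[−I_m,0]]. Then Ω_α is a 2-cocycle on ℤⁿ with values in S¹ (i.e., Ω_α(x,y)Ω_α(x+y,z) = Ω_α(x,y+z)Ω_α(y,z)), and Ω_α is a coboundary (of the form ∂ω for some ω : ℤⁿ → S¹) if and only if α ∈ πℤ. -/

import Mathlib

open Matrix Sum Finset Real

lemma bform_eq {m : ℕ} (x y : Fin m ⊕ Fin m → ℤ) :
    dotProduct x ((Matrix.fromBlocks (0 : Matrix (Fin m) (Fin m) ℤ) 1 (-1) 0).mulVec y)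
      = (∑ i, x (Sum.inl i) * y (Sum.inr i)) - ∑ i, x (Sum.inr i) * y (Sum.inl i) := by
  simp [dotProduct, Matrix.mulVec, Fintype.sum_sum_type, Matrix.fromBlocks,
    Matrix.one_apply, mul_ite, Finset.mul_sum, sub_eq_add_neg, ← Finset.sum_neg_distrib,
    apply_ite (fun t : ℤ => -t)]

/-- The symplectic `2`-cochain `Ω_α(x,y) = exp(i α xᵗ J y)` on `ℤ^{2m}`,
where `J = [[0, I], [-I, 0]]`. -/
noncomputable def OmegaAlpha (m : ℕ) (α : ℝ) (x y : Fin m ⊕ Fin m → ℤ) : Circle :=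
  Circle.exp (α * ((dotProduct x
    ((Matrix.fromBlocks (0 : Matrix (Fin m) (Fin m) ℤ) 1 (-1) 0).mulVec y) : ℤ) : ℝ))

/-- `Ω_α` is a `2`-cocycle on `ℤ^{2m}` with values in the circle group, and it
is a coboundary if and only if `α ∈ πℤ`. -/
theorem omegaAlpha_cocycle_and_coboundary_iff {m : ℕ} (hm : 0 < m) (α : ℝ) :
    (∀ x y z : Fin m ⊕ Fin m → ℤ,
      OmegaAlpha m α x y * OmegaAlpha m α (x + y) z =
        OmegaAlpha m α x (y + z) * OmegaAlpha m α y z) ∧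
    ((∃ ω : (Fin m ⊕ Fin m → ℤ) → Circle, ∀ x y : Fin m ⊕ Fin m → ℤ,
        OmegaAlpha m α x y = ω (x + y) * (ω x)⁻¹ * (ω y)⁻¹) ↔
      ∃ k : ℤ, α = k * Real.pi) := by
  constructor
  · intro x y z
    simp only [OmegaAlpha, ← Circle.exp_add]
    congr 1
    have h1 := bform_eq x y
    have h2 := bform_eq (x + y) z
    have h3 := bform_eq x (y + z)
    have h4 := bform_eq y z
    rw [h1, h2, h3, h4]
    push_cast [Pi.add_apply, add_mul, mul_add, Finset.sum_add_distrib]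
    ring
  constructor
  · rintro ⟨ω, hω⟩
    -- symmetry of the coboundary forces Ω(x,y) = Ω(y,x)
    obtain ⟨i0⟩ := Fin.pos_iff_nonempty.mp hm
    set x : Fin m ⊕ Fin m → ℤ := fun j => if j = Sum.inl i0 then 1 else 0 with hx
    set y : Fin m ⊕ Fin m → ℤ := fun j => if j = Sum.inr i0 then 1 else 0 with hy
    have hsym : OmegaAlpha m α x y = OmegaAlpha m α y x := by
      rw [hω x y, hω y x, add_comm y x]
      exact mul_right_comm _ _ _
    have hBxy : dotProduct x
        ((Matrix.fromBlocks (0 : Matrix (Fin m) (Fin m) ℤ) 1 (-1) 0).mulVec y) = 1 := by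
      rw [bform_eq]
      simp [hx, hy, Finset.sum_ite_eq']
    have hByx : dotProduct y
        ((Matrix.fromBlocks (0 : Matrix (Fin m) (Fin m) ℤ) 1 (-1) 0).mulVec x) = -1 := by
      rw [bform_eq]
      simp [hx, hy, Finset.sum_ite_eq']
    rw [OmegaAlpha, OmegaAlpha, hBxy, hByx] at hsym
    push_cast at hsym
    have : Circle.exp (α * 1 - α * (-1)) = 1 := by
      rw [Circle.exp_sub, hsym, div_self']
    rw [Circle.exp_eq_one] at this
    obtain ⟨n, hn⟩ := this
    refine ⟨n, ?_⟩
    linarith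
  · rintro ⟨k, rfl⟩
    refine ⟨fun x => Circle.exp ((k * Real.pi) * ((∑ i, x (Sum.inl i) * x (Sum.inr i) : ℤ) : ℝ)),
      fun x y => ?_⟩
    rw [OmegaAlpha, ← Circle.exp_neg, ← Circle.exp_neg, ← Circle.exp_add, ← Circle.exp_add]
    rw [show Circle.exp ((k * Real.pi) *
      ((dotProduct x ((Matrix.fromBlocks (0 : Matrix (Fin m) (Fin m) ℤ) 1 (-1) 0).mulVec y) : ℤ) : ℝ))
      = Circle.exp ((k * Real.pi) * ((dotProduct x ((Matrix.fromBlocks (0 : Matrix (Fin m) (Fin m) ℤ) 1 (-1) 0).mulVec y) : ℤ) : ℝ)) from rfl]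
    have key : ((k * Real.pi) * ((∑ i, (x + y) (Sum.inl i) * (x + y) (Sum.inr i) : ℤ) : ℝ)
        + -((k * Real.pi) * ((∑ i, x (Sum.inl i) * x (Sum.inr i) : ℤ) : ℝ))
        + -((k * Real.pi) * ((∑ i, y (Sum.inl i) * y (Sum.inr i) : ℤ) : ℝ)))
        - (k * Real.pi) * ((dotProduct x
            ((Matrix.fromBlocks (0 : Matrix (Fin m) (Fin m) ℤ) 1 (-1) 0).mulVec y) : ℤ) : ℝ)
        = ((k * (∑ i, x (Sum.inr i) * y (Sum.inl i))) : ℤ) * (2 * Real.pi) := by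
      rw [bform_eq]
      have hc : (∑ i, ((y (Sum.inl i) : ℝ)) * ((x (Sum.inr i) : ℝ)))
          = ∑ i, ((x (Sum.inr i) : ℝ)) * ((y (Sum.inl i) : ℝ)) :=
        Finset.sum_congr rfl fun i _ => mul_comm _ _
      push_cast [Pi.add_apply, add_mul, mul_add, Finset.sum_add_distrib]
      rw [hc]
      ring
    have := Circle.exp_int_mul_two_pi (k * (∑ i, x (Sum.inr i) * y (Sum.inl i)))
    calc OmegaAlpha m (k * Real.pi) x y
        = Circle.exp ((k * Real.pi) * ((dotProduct x
            ((Matrix.fromBlocks (0 : Matrix (Fin m) (Fin m) ℤ) 1 (-1) 0).mulVec y) : ℤ) : ℝ)) := rfl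
      _ = _ := by
          rw [← one_mul (Circle.exp _), ← this, ← Circle.exp_add, ← key]
          ring_nf
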